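/- Let T be a symmetric complex a×a matrix with negative definite real part, and let γ⁺, γ⁻ ∈ ℂᵃ satisfy γ⁺ = −T γ⁻. Then the theta-function satisfies the differential equation Σ_{j=1}^a ( γ⁺_j ( z_j θ[T; z, ζ] + (2π/i) ∂θ[T; z, ζ]/∂ζ_j ) + γ⁻_j ∂θ[T; z, ζ]/∂z_j ) = 0 for all z, ζ ∈ ℝᵃ. -/

import Mathlib

open Matrix MeasureTheory Real

noncomputable section

/-- Complexification of a real vector. -/
def cv {ι : Type*} (x : ι → ℝ) : ι → ℂ := fun i => (x i : ℂ)

/-- The theta-function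
`θ[T; z, ζ] = Σ_{k∈ℤᵃ} exp{½ (z + 2πk)ᵗ T (z + 2πk)} e^{i k·ζ}`. -/
def theta {a : ℕ} (T : Matrix (Fin a) (Fin a) ℂ) (z ζ : Fin a → ℝ) : ℂ :=
  ∑' k : Fin a → ℤ,
    Complex.exp
      ((1 / 2 : ℂ) * dotProduct (cv fun i => z i + 2 * π * k i)
          (T.mulVec (cv fun i => z i + 2 * π * k i))
        + Complex.I * ∑ i, (k i : ℂ) * (ζ i : ℂ))

namespace ThetaAux

variable {a : ℕ}

/-- The summand of the theta function. -/
def ex (T : Matrix (Fin a) (Fin a) ℂ) (k : Fin a → ℤ) (z ζ : Fin a → ℝ) : ℂ :=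
  Complex.exp
      ((1 / 2 : ℂ) * dotProduct (cv fun i => z i + 2 * π * k i)
          (T.mulVec (cv fun i => z i + 2 * π * k i))
        + Complex.I * ∑ i, (k i : ℂ) * (ζ i : ℂ))

lemma theta_eq (T : Matrix (Fin a) (Fin a) ℂ) (z ζ : Fin a → ℝ) :
    theta T z ζ = ∑' k : Fin a → ℤ, ex T k z ζ := rfl

/-- The continuous linear functional `h ↦ ∑ i, v i * h i`. -/
def mapd (v : Fin a → ℂ) : (Fin a → ℝ) →L[ℝ] ℂ :=
  ∑ i, v i • ((Complex.ofRealCLM : ℝ →L[ℝ] ℂ).comp (ContinuousLinearMap.proj i))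

lemma mapd_apply (v : Fin a → ℂ) (h : Fin a → ℝ) : mapd v h = ∑ i, v i * h i := by
  simp [mapd]

lemma mapd_single (v : Fin a → ℂ) (j : Fin a) : mapd v (Pi.single j 1) = v j := by
  rw [mapd_apply, Finset.sum_eq_single j]
  · simp
  · intro i _ hij
    simp [Pi.single_apply, hij]
  · simp

lemma mapd_single_one (j : Fin a) (h : Fin a → ℝ) :
    mapd (Pi.single j 1 : Fin a → ℂ) h = (h j : ℂ) := by
  rw [mapd_apply, Finset.sum_eq_single j]
  · simp
  · intro i _ hij
    simp [Pi.single_apply, hij]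
  · simp

lemma norm_mapd_le (v : Fin a → ℂ) : ‖mapd v‖ ≤ ∑ i, ‖v i‖ := by
  refine ContinuousLinearMap.opNorm_le_bound _ (by positivity) fun h => ?_
  rw [mapd_apply]
  calc ‖∑ i, v i * (h i : ℂ)‖ ≤ ∑ i, ‖v i * (h i : ℂ)‖ := norm_sum_le _ _
    _ ≤ ∑ i, ‖v i‖ * ‖h‖ := by
        refine Finset.sum_le_sum fun i _ => ?_
        rw [norm_mul]
        refine mul_le_mul_of_nonneg_left ?_ (norm_nonneg _)
        rw [Complex.norm_real]
        exact norm_le_pi_norm h i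
    _ = (∑ i, ‖v i‖) * ‖h‖ := (Finset.sum_mul _ _ _).symm

lemma hasFDerivAt_coord (k : Fin a → ℤ) (i : Fin a) (z : Fin a → ℝ) :
    HasFDerivAt (fun z' : Fin a → ℝ => ((z' i + 2 * π * k i : ℝ) : ℂ))
      (mapd (Pi.single i 1)) z := by
  have h1 : HasFDerivAt (fun z' : Fin a → ℝ => z' i + 2 * π * k i)
      (ContinuousLinearMap.proj i : (Fin a → ℝ) →L[ℝ] ℝ) z := by
    exact ((ContinuousLinearMap.proj (R := ℝ) (φ := fun _ : Fin a => ℝ)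
      i).hasFDerivAt (x := z)).add_const (2 * π * (k i : ℝ))
  have h2 := (Complex.ofRealCLM.hasFDerivAt (x := z i + 2 * π * k i)).comp z h1
  refine HasFDerivAt.congr_fderiv h2 ?_
  ext h
  simp [mapd_single_one]

lemma hasFDerivAt_quad (T : Matrix (Fin a) (Fin a) ℂ) (hsym : Tᵀ = T)
    (k : Fin a → ℤ) (z : Fin a → ℝ) :
    HasFDerivAt (fun z' : Fin a → ℝ =>
        (1 / 2 : ℂ) * dotProduct (cv fun i => z' i + 2 * π * k i)
          (T.mulVec (cv fun i => z' i + 2 * π * k i)))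
      (mapd (T.mulVec (cv fun i => z i + 2 * π * k i))) z := by
  have hT : ∀ i j, T j i = T i j := fun i j => by
    rw [← Matrix.transpose_apply T i j, hsym]
  set c : Fin a → ℂ := cv fun i => z i + 2 * π * k i with hc
  have hrow : ∀ i, HasFDerivAt
      (fun z' : Fin a → ℝ => ∑ j, T i j * ((z' j + 2 * π * k j : ℝ) : ℂ))
      (∑ j, T i j • mapd (Pi.single j 1)) z :=
    fun i => HasFDerivAt.fun_sum fun j _ => (hasFDerivAt_coord k j z).const_mul (T i j)
  have hterm : ∀ i, HasFDerivAt
      (fun z' : Fin a → ℝ =>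
        ((z' i + 2 * π * k i : ℝ) : ℂ) * ∑ j, T i j * ((z' j + 2 * π * k j : ℝ) : ℂ))
      (c i • (∑ j, T i j • mapd (Pi.single j 1))
        + (∑ j, T i j * c j) • mapd (Pi.single i 1)) z :=
    fun i => (hasFDerivAt_coord k i z).mul (hrow i)
  have hsum := (HasFDerivAt.fun_sum fun i (_ : i ∈ Finset.univ) => hterm i).const_mul (1 / 2 : ℂ)
  have heq : (fun z' : Fin a → ℝ =>
        (1 / 2 : ℂ) * ∑ i, ((z' i + 2 * π * k i : ℝ) : ℂ)
          * ∑ j, T i j * ((z' j + 2 * π * k j : ℝ) : ℂ))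
      = (fun z' : Fin a → ℝ =>
        (1 / 2 : ℂ) * dotProduct (cv fun i => z' i + 2 * π * k i)
          (T.mulVec (cv fun i => z' i + 2 * π * k i))) := by
    funext z'
    simp [dotProduct, Matrix.mulVec, cv]
  rw [heq] at hsum
  refine hsum.congr_fderiv (Eq.symm ?_)
  ext h
  rw [mapd_apply]
  simp only [ContinuousLinearMap.smul_apply, ContinuousLinearMap.add_apply,
    ContinuousLinearMap.sum_apply, mapd_single_one, smul_eq_mul]
  have hswap : ∑ i, c i * ∑ j, T i j * ((h j : ℝ) : ℂ)
      = ∑ i, (∑ j, T i j * c j) * ((h i : ℝ) : ℂ) := by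
    calc ∑ i, c i * ∑ j, T i j * ((h j : ℝ) : ℂ)
        = ∑ i, ∑ j, T i j * c i * ((h j : ℝ) : ℂ) := by
          refine Finset.sum_congr rfl fun i _ => ?_
          rw [Finset.mul_sum]
          exact Finset.sum_congr rfl fun j _ => by ring
      _ = ∑ j, ∑ i, T i j * c i * ((h j : ℝ) : ℂ) := Finset.sum_comm
      _ = ∑ j, (∑ i, T j i * c i) * ((h j : ℝ) : ℂ) := by
          refine Finset.sum_congr rfl fun j _ => ?_
          rw [Finset.sum_mul]
          exact Finset.sum_congr rfl fun i _ => by rw [hT i j]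
  have hmv : ∀ i, (T.mulVec c) i = ∑ j, T i j * c j := fun i => rfl
  simp only [hmv]
  rw [Finset.sum_add_distrib, hswap]
  ring

/-- derivative of the summand in `z`. -/
lemma hasFDerivAt_ex_z (T : Matrix (Fin a) (Fin a) ℂ) (hsym : Tᵀ = T)
    (k : Fin a → ℤ) (ζ : Fin a → ℝ) (z : Fin a → ℝ) :
    HasFDerivAt (fun z' => ex T k z' ζ)
      (ex T k z ζ • mapd (T.mulVec (cv fun i => z i + 2 * π * k i))) z := by
  exact ((hasFDerivAt_quad T hsym k z).add_const _).cexp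

/-- derivative of the summand in `ζ`. -/
lemma hasFDerivAt_ex_ζ (T : Matrix (Fin a) (Fin a) ℂ)
    (k : Fin a → ℤ) (z : Fin a → ℝ) (ζ : Fin a → ℝ) :
    HasFDerivAt (fun ζ' => ex T k z ζ')
      ((ex T k z ζ * Complex.I) • mapd fun i => (k i : ℂ)) ζ := by
  have h1 : HasFDerivAt (fun ζ' : Fin a → ℝ => ∑ i, (k i : ℂ) * ((ζ' i : ℝ) : ℂ))
      (mapd fun i => (k i : ℂ)) ζ := by
    refine HasFDerivAt.fun_sum fun i _ => ?_
    have h2 := (Complex.ofRealCLM.hasFDerivAt (x := ζ i)).comp ζ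
      ((ContinuousLinearMap.proj i : (Fin a → ℝ) →L[ℝ] ℝ).hasFDerivAt (x := ζ))
    exact h2.const_mul _
  have h3 := ((h1.const_mul Complex.I).const_add
    ((1 / 2 : ℂ) * dotProduct (cv fun i => z i + 2 * π * k i)
      (T.mulVec (cv fun i => z i + 2 * π * k i)))).cexp
  rw [smul_smul] at h3
  exact h3

lemma norm_ex (T : Matrix (Fin a) (Fin a) ℂ) (k : Fin a → ℤ) (z ζ : Fin a → ℝ) :
    ‖ex T k z ζ‖ = Real.exp (((1 / 2 : ℂ) * dotProduct (cv fun i => z i + 2 * π * k i)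
      (T.mulVec (cv fun i => z i + 2 * π * k i))).re) := by
  rw [ex, Complex.norm_exp]
  congr 1
  rw [Complex.add_re]
  have : (∑ i, (k i : ℂ) * ((ζ i : ℝ) : ℂ)) = (((∑ i, (k i : ℝ) * ζ i : ℝ)) : ℂ) := by
    push_cast; ring
  rw [this]
  simp

lemma re_quad (T : Matrix (Fin a) (Fin a) ℂ) (x : Fin a → ℝ) :
    (dotProduct (cv x) (T.mulVec (cv x))).re
      = dotProduct x ((T.map Complex.re).mulVec x) := by
  simp only [dotProduct, Matrix.mulVec, cv, Matrix.map_apply, Complex.re_sum]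
  refine Finset.sum_congr rfl fun i _ => ?_
  rw [Complex.re_ofReal_mul, Complex.re_sum]
  congr 1
  refine Finset.sum_congr rfl fun j _ => ?_
  simp [Complex.mul_re]

/-- Positive definite real matrices are bounded below by a multiple of the sum of squares. -/
lemma posdef_bound {M : Matrix (Fin a) (Fin a) ℝ} (hM : M.PosDef) :
    ∃ c > 0, ∀ x : Fin a → ℝ, c * ∑ i, x i ^ 2 ≤ dotProduct x (M.mulVec x) := by
  set f : (Fin a → ℝ) → ℝ := fun x => dotProduct x (M.mulVec x) with hf
  set S : Set (Fin a → ℝ) := {x | ∑ i, x i ^ 2 = 1} with hSdef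
  have hscale : ∀ (r : ℝ) (x : Fin a → ℝ), f (r • x) = r ^ 2 * f x := by
    intro r x
    rw [hf]
    simp only [Matrix.mulVec_smul, smul_dotProduct, dotProduct_smul,
      smul_eq_mul]
    ring
  have hpos : ∀ x : Fin a → ℝ, x ≠ 0 → 0 < f x := by
    intro x hx
    have := hM.re_dotProduct_pos (x := x) hx
    simpa using this
  have hsq : ∀ x : Fin a → ℝ, x ≠ 0 → 0 < ∑ i, x i ^ 2 := by
    intro x hx
    obtain ⟨i, hi⟩ := Function.ne_iff.1 hx
    exact Finset.sum_pos' (fun j _ => sq_nonneg _) ⟨i, Finset.mem_univ i, by rw [← sq_abs]; exact pow_pos (abs_pos.2 hi) 2⟩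
  have hmem : ∀ x : Fin a → ℝ, x ≠ 0 → (Real.sqrt (∑ i, x i ^ 2))⁻¹ • x ∈ S := by
    intro x hx
    have hs := hsq x hx
    have h1 : (Real.sqrt (∑ i, x i ^ 2))⁻¹ ^ 2 = (∑ i, x i ^ 2)⁻¹ := by
      rw [inv_pow, Real.sq_sqrt hs.le]
    simp only [hSdef, Set.mem_setOf_eq, Pi.smul_apply, smul_eq_mul, mul_pow]
    rw [← Finset.mul_sum, h1]
    exact inv_mul_cancel₀ hs.ne'
  rcases Nat.eq_zero_or_pos a with ha | ha
  · refine ⟨1, one_pos, fun x => ?_⟩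
    subst ha
    have hx : x = 0 := funext fun i => absurd i.2 (by omega)
    subst hx
    simp [hf]
  · have hS : S.Nonempty := by
      have hne : (Pi.single (Fin.mk 0 ha) 1 : Fin a → ℝ) ≠ 0 := by
        intro h
        have := congrFun h (Fin.mk 0 ha)
        simp at this
      exact ⟨_, hmem _ hne⟩
    have hcont : Continuous f := by
      rw [hf]
      show Continuous fun x : Fin a → ℝ => ∑ i, x i * ∑ j, M i j * x j
      exact continuous_finset_sum _ fun i _ => (continuous_apply i).mul
        (continuous_finset_sum _ fun j _ => continuous_const.mul (continuous_apply j))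
    have hclosed : IsClosed S :=
      isClosed_eq (continuous_finset_sum _ fun i _ => (continuous_apply i).pow 2)
        continuous_const
    have hsub : S ⊆ Metric.closedBall 0 1 := by
      intro x hx
      rw [Metric.mem_closedBall, dist_zero_right]
      refine (pi_norm_le_iff_of_nonneg zero_le_one).2 fun i => ?_
      rw [Real.norm_eq_abs]
      have h1 : x i ^ 2 ≤ 1 := by
        have := Finset.single_le_sum (fun j (_ : j ∈ Finset.univ) => sq_nonneg (x j))
          (Finset.mem_univ i)
        rw [hx] at this
        exact this
      exact (sq_le_one_iff_abs_le_one _).1 h1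
    have hcomp : IsCompact S :=
      Metric.isCompact_of_isClosed_isBounded hclosed
        ((Metric.isBounded_closedBall (x := (0 : Fin a → ℝ)) (r := 1)).subset hsub)
    obtain ⟨x₀, hx₀S, hmin⟩ := hcomp.exists_isMinOn hS hcont.continuousOn
    have hx₀ne : x₀ ≠ 0 := by
      intro h
      rw [hSdef] at hx₀S
      rw [h] at hx₀S
      simp at hx₀S
    refine ⟨f x₀, hpos x₀ hx₀ne, fun x => ?_⟩
    rcases eq_or_ne x 0 with rfl | hx
    · have h0 : ∑ i, (0 : Fin a → ℝ) i ^ 2 = 0 := by simp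
      have h1 : f (0 : Fin a → ℝ) = 0 := by rw [hf]; simp [zero_dotProduct]
      rw [h0, mul_zero]
      simp only [zero_dotProduct]
      exact le_refl 0
    · have hspos : 0 < ∑ i, x i ^ 2 := hsq x hx
      have hyS := hmem x hx
      have h2 : f x₀ ≤ f ((Real.sqrt (∑ i, x i ^ 2))⁻¹ • x) := hmin hyS
      have h3 : f ((Real.sqrt (∑ i, x i ^ 2))⁻¹ • x) = (∑ i, x i ^ 2)⁻¹ * f x := by
        rw [hscale, inv_pow, Real.sq_sqrt hspos.le]
      rw [h3] at h2
      have h4 : (∑ i, x i ^ 2) * f x₀ ≤ (∑ i, x i ^ 2) * ((∑ i, x i ^ 2)⁻¹ * f x) :=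
        mul_le_mul_of_nonneg_left h2 hspos.le
      rw [← mul_assoc, mul_inv_cancel₀ hspos.ne', one_mul] at h4
      linarith [h4]

/-- Products of summable nonneg families over `ℤ` are summable over `ℤᵃ`. -/
lemma summable_pi_prod : ∀ {a : ℕ} (g : Fin a → ℤ → ℝ), (∀ i m, 0 ≤ g i m) →
    (∀ i, Summable (g i)) →
    Summable fun k : Fin a → ℤ => ∏ i, g i (k i) := by
  intro a
  induction a with
  | zero =>
    intro g h0 hs
    simp only [Finset.univ_eq_empty, Finset.prod_empty]
    exact Summable.of_finite
  | succ n ih =>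
    intro g h0 hs
    rw [← (Fin.consEquiv (fun _ : Fin (n + 1) => ℤ)).summable_iff]
    have heq : ((fun k : Fin (n + 1) → ℤ => ∏ i, g i (k i))
          ∘ (Fin.consEquiv (fun _ : Fin (n + 1) => ℤ)))
        = fun p : ℤ × (Fin n → ℤ) => g 0 p.1 * ∏ i : Fin n, g i.succ (p.2 i) := by
      funext p
      simp only [Function.comp_apply, Fin.consEquiv_apply]
      rw [Fin.prod_univ_succ]
      simp [Fin.cons_zero, Fin.cons_succ]
    rw [heq]
    exact Summable.mul_of_nonneg (f := g 0)
      (g := fun k : Fin n → ℤ => ∏ i : Fin n, g i.succ (k i)) (hs 0)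
      (ih (fun i => g i.succ) (fun i m => h0 _ m) (fun i => hs _))
      (fun m => h0 0 m) (fun p => Finset.prod_nonneg fun i _ => h0 _ _)

/-- One-dimensional summability of the majorant factor. -/
lemma summable_b {c R : ℝ} (hc : 0 < c) (hR : 0 ≤ R) (k : ℕ) :
    Summable fun m : ℤ =>
      |(m : ℝ)| ^ k * Real.exp (-π * (2 * π * c * (m : ℝ) ^ 2 - 2 * (c * R) * |(m : ℝ)|)) := by
  have h := summable_pow_mul_jacobiTheta₂_term_bound (c * R)
    (by positivity : (0 : ℝ) < 2 * π * c) k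
  refine h.congr fun m => ?_
  push_cast [Int.cast_abs]
  ring_nf

/-- The summable majorant. -/
lemma summable_major {c R : ℝ} (hc : 0 < c) (hR : 0 ≤ R) :
    Summable fun k : Fin a → ℤ =>
      (∑ j, (R + 2 * π * |(k j : ℝ)|))
        * ∏ i, Real.exp (-π * (2 * π * c * (k i : ℝ) ^ 2 - 2 * (c * R) * |(k i : ℝ)|)) := by
  set b : ℤ → ℝ := fun m =>
    Real.exp (-π * (2 * π * c * (m : ℝ) ^ 2 - 2 * (c * R) * |(m : ℝ)|)) with hbdef
  have hb0 : ∀ m : ℤ, 0 ≤ b m := fun m => (Real.exp_pos _).le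
  have hb : Summable b := by
    have := summable_b hc hR 0
    refine this.congr fun m => ?_
    rw [pow_zero, one_mul]
  have hb1 : Summable (fun m : ℤ => (R + 2 * π * |(m : ℝ)|) * b m) := by
    have h0 := (hb.mul_left R)
    have h1 := ((summable_b hc hR 1).mul_left (2 * π))
    refine (h0.add h1).congr fun m => ?_
    simp only [pow_one]
    ring
  have heq : (fun k : Fin a → ℤ => (∑ j, (R + 2 * π * |(k j : ℝ)|)) * ∏ i, b (k i))
      = fun k => ∑ j, ((R + 2 * π * |(k j : ℝ)|) * ∏ i, b (k i)) :=
    funext fun k => Finset.sum_mul _ _ _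
  rw [heq]
  refine summable_sum fun j _ => ?_
  have hpi := summable_pi_prod
    (fun i m => (if i = j then (R + 2 * π * |(m : ℝ)|) else 1) * b m)
    (fun i m => by
      refine mul_nonneg ?_ (hb0 m)
      split
      · positivity
      · exact zero_le_one)
    (fun i => by
      by_cases h : i = j
      · simp only [h, if_true]
        exact hb1
      · simp only [h, if_false]
        exact hb.congr fun m => (one_mul _).symm)
  refine hpi.congr fun k => ?_
  rw [Finset.prod_mul_distrib, Finset.prod_ite_eq' Finset.univ j
    (fun i => R + 2 * π * |(k i : ℝ)|)]
  simp

end ThetaAux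

/-- the theta-function satisfies the differential equation
`Σ_j (γ⁺_j (z_j θ + (2π/i) ∂θ/∂ζ_j) + γ⁻_j ∂θ/∂z_j) = 0` when `γ⁺ = −T γ⁻`. -/
theorem theta_differential_equation (a : ℕ)
    (T : Matrix (Fin a) (Fin a) ℂ)
    (hsym : Tᵀ = T) (hneg : (-(T.map Complex.re)).PosDef)
    (γp γm : Fin a → ℂ) (hγ : γp = -(T.mulVec γm)) :
    ∀ z ζ : Fin a → ℝ,
      ∑ j, (γp j * ((z j : ℂ) * theta T z ζ
              + (2 * (π : ℂ) / Complex.I) *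
                  fderiv ℝ (fun ζ' => theta T z ζ') ζ (Pi.single j 1))
          + γm j * fderiv ℝ (fun z' => theta T z' ζ) z (Pi.single j 1)) = 0 := by
  intro z ζ
  obtain ⟨c, hc, hquad⟩ := ThetaAux.posdef_bound hneg
  obtain ⟨R, hRdef⟩ : ∃ R : ℝ, R = ‖z‖ + 1 := ⟨_, rfl⟩
  have hR0 : 0 ≤ R := by rw [hRdef]; positivity
  obtain ⟨b, hbdef⟩ : ∃ b : ℤ → ℝ, b = fun m : ℤ =>
    Real.exp (-π * (2 * π * c * (m : ℝ) ^ 2 - 2 * (c * R) * |(m : ℝ)|)) := ⟨_, rfl⟩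
  have hb0 : ∀ m : ℤ, 0 ≤ b m := fun m => by
    rw [hbdef]; exact (Real.exp_pos _).le
  obtain ⟨P, hPdef⟩ : ∃ P : (Fin a → ℤ) → ℝ,
    P = fun k => ∑ j, (R + 2 * π * |(k j : ℝ)|) := ⟨_, rfl⟩
  have hP0 : ∀ k, 0 ≤ P k := fun k => by
    rw [hPdef]
    exact Finset.sum_nonneg fun j _ => by positivity
  obtain ⟨Ct, hCtdef⟩ : ∃ Ct : ℝ, Ct = ∑ i, ∑ j, ‖T i j‖ := ⟨_, rfl⟩
  have hCt0 : 0 ≤ Ct := by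
    rw [hCtdef]
    exact Finset.sum_nonneg fun i _ => Finset.sum_nonneg fun j _ => norm_nonneg _
  obtain ⟨u, hudef⟩ : ∃ u : (Fin a → ℤ) → ℝ,
    u = fun k => (Ct + 1) * (P k * ∏ i, b (k i)) := ⟨_, rfl⟩
  have husum : Summable u := by
    rw [hudef, hPdef, hbdef]
    exact (ThetaAux.summable_major hc hR0).mul_left _
  have hprodnn : ∀ k : Fin a → ℤ, 0 ≤ ∏ i, b (k i) :=
    fun k => Finset.prod_nonneg fun i _ => hb0 _
  have hbprod : Summable fun k : Fin a → ℤ => ∏ i, b (k i) :=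
    ThetaAux.summable_pi_prod (fun _ m => b m) (fun _ m => hb0 m) fun _ =>
      (ThetaAux.summable_b hc hR0 0).congr fun m => by
        rw [pow_zero, one_mul, hbdef]
  have hzR : ∀ i, |z i| ≤ R := by
    intro i
    have h1 : ‖z i‖ ≤ ‖z‖ := norm_le_pi_norm z i
    rw [Real.norm_eq_abs] at h1
    rw [hRdef]; linarith
  have hballR : ∀ x : Fin a → ℝ, x ∈ Metric.ball z 1 → ∀ i, |x i| ≤ R := by
    intro x hx i
    rw [Metric.mem_ball, dist_eq_norm] at hx
    have h1 : ‖x i‖ ≤ ‖x‖ := norm_le_pi_norm x i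
    have h2 : ‖x‖ - ‖z‖ ≤ ‖x - z‖ := norm_sub_norm_le x z
    rw [Real.norm_eq_abs] at h1
    rw [hRdef]; linarith
  -- the exponential bound
  have hexp : ∀ (k : Fin a → ℤ) (x : Fin a → ℝ), (∀ i, |x i| ≤ R) → ∀ ζ' : Fin a → ℝ,
      ‖ThetaAux.ex T k x ζ'‖ ≤ ∏ i, b (k i) := by
    intro k x hxR ζ'
    rw [ThetaAux.norm_ex]
    have h1 : ((1 / 2 : ℂ) * dotProduct (cv fun i => x i + 2 * π * k i)
          (T.mulVec (cv fun i => x i + 2 * π * k i))).re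
        = (1 / 2 : ℝ) * dotProduct (fun i => x i + 2 * π * k i)
            ((T.map Complex.re).mulVec (fun i => x i + 2 * π * k i)) := by
      rw [show (1 / 2 : ℂ) = ((1 / 2 : ℝ) : ℂ) by norm_num, Complex.re_ofReal_mul,
        ThetaAux.re_quad]
    rw [h1]
    have h2 : dotProduct (fun i => x i + 2 * π * k i)
        ((T.map Complex.re).mulVec (fun i => x i + 2 * π * k i))
        ≤ -(c * ∑ i, (x i + 2 * π * k i) ^ 2) := by
      have h3 := hquad (fun i => x i + 2 * π * k i)
      have h4 : dotProduct (fun i => x i + 2 * π * k i)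
          ((-(T.map Complex.re)).mulVec (fun i => x i + 2 * π * k i))
          = -dotProduct (fun i => x i + 2 * π * k i)
              ((T.map Complex.re).mulVec (fun i => x i + 2 * π * k i)) := by
        rw [Matrix.neg_mulVec, dotProduct_neg]
      rw [h4] at h3
      linarith
    have h5 : (1 / 2 : ℝ) * dotProduct (fun i => x i + 2 * π * k i)
          ((T.map Complex.re).mulVec (fun i => x i + 2 * π * k i))
        ≤ ∑ i, -(c / 2) * (x i + 2 * π * k i) ^ 2 := by
      rw [show (∑ i, -(c / 2) * (x i + 2 * π * (k i : ℝ)) ^ 2)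
          = -(c / 2) * ∑ i, (x i + 2 * π * (k i : ℝ)) ^ 2 from (Finset.mul_sum _ _ _).symm]
      linarith
    calc Real.exp _
        ≤ Real.exp (∑ i, -(c / 2) * (x i + 2 * π * (k i : ℝ)) ^ 2) := Real.exp_le_exp.2 h5
      _ = ∏ i, Real.exp (-(c / 2) * (x i + 2 * π * (k i : ℝ)) ^ 2) := Real.exp_sum _ _
      _ ≤ ∏ i, b (k i) := by
          refine Finset.prod_le_prod (fun i _ => (Real.exp_pos _).le) fun i _ => ?_
          rw [hbdef]
          refine Real.exp_le_exp.2 ?_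
          have hxi := hxR i
          have e1 : -(2 * π * |(k i : ℝ)| * R) ≤ 2 * π * (k i : ℝ) * x i := by
            have h6 : |2 * π * (k i : ℝ) * x i| = 2 * π * |(k i : ℝ)| * |x i| := by
              rw [abs_mul, abs_mul, abs_of_pos Real.two_pi_pos]
            have h7 : 2 * π * |(k i : ℝ)| * |x i| ≤ 2 * π * |(k i : ℝ)| * R :=
              mul_le_mul_of_nonneg_left hxi (by positivity)
            have h8 := neg_abs_le (2 * π * (k i : ℝ) * x i)
            rw [h6] at h8
            linarith
          nlinarith [mul_le_mul_of_nonneg_left e1 hc.le,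
            mul_nonneg hc.le (sq_nonneg (x i))]
  -- bounds for the two linear functionals
  have hmapdz : ∀ (k : Fin a → ℤ) (x : Fin a → ℝ), (∀ i, |x i| ≤ R) →
      ‖ThetaAux.mapd (T.mulVec (cv fun i => x i + 2 * π * k i))‖ ≤ Ct * P k := by
    intro k x hxR
    refine (ThetaAux.norm_mapd_le _).trans ?_
    have hstep : ∀ i, ‖(T.mulVec (cv fun i => x i + 2 * π * k i)) i‖
        ≤ ∑ j, ‖T i j‖ * (R + 2 * π * |(k j : ℝ)|) := by
      intro i
      have hrfl : (T.mulVec (cv fun i => x i + 2 * π * k i)) i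
          = ∑ j, T i j * ((x j + 2 * π * k j : ℝ) : ℂ) := rfl
      rw [hrfl]
      refine (norm_sum_le _ _).trans (Finset.sum_le_sum fun j _ => ?_)
      rw [norm_mul, Complex.norm_real, Real.norm_eq_abs]
      refine mul_le_mul_of_nonneg_left ?_ (norm_nonneg _)
      refine (abs_add_le _ _).trans ?_
      have h9 : |2 * π * (k j : ℝ)| = 2 * π * |(k j : ℝ)| := by
        rw [abs_mul, abs_of_pos Real.two_pi_pos]
      rw [h9]
      exact add_le_add_left (hxR j) _
    refine (Finset.sum_le_sum fun i _ => hstep i).trans ?_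
    have hstep2 : ∀ i : Fin a, (∑ j, ‖T i j‖ * (R + 2 * π * |(k j : ℝ)|))
        ≤ (∑ j, ‖T i j‖) * P k := by
      intro i
      rw [Finset.sum_mul]
      refine Finset.sum_le_sum fun j _ => ?_
      refine mul_le_mul_of_nonneg_left ?_ (norm_nonneg _)
      rw [hPdef]
      exact Finset.single_le_sum (fun j' (_ : j' ∈ Finset.univ) =>
        (by positivity : (0:ℝ) ≤ R + 2 * π * |(k j' : ℝ)|)) (Finset.mem_univ j)
    refine (Finset.sum_le_sum fun i _ => hstep2 i).trans ?_
    rw [hCtdef, ← Finset.sum_mul]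
  have hmapdζ : ∀ k : Fin a → ℤ, ‖ThetaAux.mapd (fun i => ((k i : ℤ) : ℂ))‖ ≤ P k := by
    intro k
    refine (ThetaAux.norm_mapd_le _).trans ?_
    rw [hPdef]
    refine Finset.sum_le_sum fun j _ => ?_
    have h1 : ‖((k j : ℤ) : ℂ)‖ = |(k j : ℝ)| := by
      rw [show ((k j : ℤ) : ℂ) = (((k j : ℤ) : ℝ) : ℂ) by push_cast; ring,
        Complex.norm_real, Real.norm_eq_abs]
    rw [h1]
    nlinarith [Real.pi_gt_three, abs_nonneg ((k j : ℝ)), hR0]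
  -- norm bounds for the derivative families
  have hDzb : ∀ (k : Fin a → ℤ) (x : Fin a → ℝ), x ∈ Metric.ball z 1 →
      ‖ThetaAux.ex T k x ζ • ThetaAux.mapd (T.mulVec (cv fun i => x i + 2 * π * k i))‖
        ≤ u k := by
    intro k x hx
    refine le_trans (ContinuousLinearMap.opNorm_smul_le _ _) ?_
    have h1 := hexp k x (hballR x hx) ζ
    have h2 := hmapdz k x (hballR x hx)
    calc ‖ThetaAux.ex T k x ζ‖ * ‖ThetaAux.mapd (T.mulVec (cv fun i => x i + 2 * π * k i))‖
        ≤ (∏ i, b (k i)) * (Ct * P k) :=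
          mul_le_mul h1 h2 (norm_nonneg _) (hprodnn k)
      _ ≤ u k := by
          simp only [hudef]
          nlinarith [mul_nonneg (hP0 k) (hprodnn k)]
  have hDζb : ∀ (k : Fin a → ℤ) (y : Fin a → ℝ),
      ‖(ThetaAux.ex T k z y * Complex.I) • ThetaAux.mapd (fun i => ((k i : ℤ) : ℂ))‖
        ≤ u k := by
    intro k y
    refine le_trans (ContinuousLinearMap.opNorm_smul_le _ _) ?_
    rw [norm_mul, show ‖Complex.I‖ = 1 from by
      simp, mul_one]
    have h1 := hexp k z hzR y
    have h2 := hmapdζ k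
    calc ‖ThetaAux.ex T k z y‖ * ‖ThetaAux.mapd (fun i => ((k i : ℤ) : ℂ))‖
        ≤ (∏ i, b (k i)) * P k := mul_le_mul h1 h2 (norm_nonneg _) (hprodnn k)
      _ ≤ u k := by
          simp only [hudef]
          nlinarith [mul_nonneg hCt0 (mul_nonneg (hP0 k) (hprodnn k))]
  have hsum0 : ∀ ζ' : Fin a → ℝ, Summable fun k : Fin a → ℤ => ThetaAux.ex T k z ζ' :=
    fun ζ' => Summable.of_norm_bounded hbprod fun k => hexp k z hzR ζ'
  -- differentiating under the sum
  have hθz : HasFDerivAt (fun z' => theta T z' ζ)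
      (∑' k : Fin a → ℤ,
        ThetaAux.ex T k z ζ • ThetaAux.mapd (T.mulVec (cv fun i => z i + 2 * π * k i))) z := by
    exact hasFDerivAt_tsum_of_isPreconnected husum Metric.isOpen_ball
      (convex_ball z 1).isPreconnected
      (fun k x _ => ThetaAux.hasFDerivAt_ex_z T hsym k ζ x)
      (fun k x hx => hDzb k x hx) (Metric.mem_ball_self one_pos) (hsum0 ζ)
      (Metric.mem_ball_self one_pos)
  have hθζ : HasFDerivAt (fun ζ' => theta T z ζ')
      (∑' k : Fin a → ℤ,
        (ThetaAux.ex T k z ζ * Complex.I) • ThetaAux.mapd (fun i => ((k i : ℤ) : ℂ))) ζ := by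
    exact hasFDerivAt_tsum husum (fun k y => ThetaAux.hasFDerivAt_ex_ζ T k z y)
      (fun k y => hDζb k y) (hsum0 ζ) ζ
  have hsumDz : Summable fun k : Fin a → ℤ =>
      ThetaAux.ex T k z ζ • ThetaAux.mapd (T.mulVec (cv fun i => z i + 2 * π * k i)) :=
    Summable.of_norm_bounded husum fun k => hDzb k z (Metric.mem_ball_self one_pos)
  have hsumDζ : Summable fun k : Fin a → ℤ =>
      (ThetaAux.ex T k z ζ * Complex.I) • ThetaAux.mapd (fun i => ((k i : ℤ) : ℂ)) :=
    Summable.of_norm_bounded husum fun k => hDζb k ζ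
  -- evaluating the derivatives at the basis vectors
  have happz : ∀ j, (fderiv ℝ (fun z' => theta T z' ζ) z) (Pi.single j 1)
      = ∑' k : Fin a → ℤ,
          ThetaAux.ex T k z ζ * (T.mulVec (cv fun i => z i + 2 * π * k i)) j := by
    intro j
    rw [hθz.fderiv]
    have h1 := (ContinuousLinearMap.apply ℝ ℂ
      ((Pi.single j 1 : Fin a → ℝ))).map_tsum hsumDz
    simp only [ContinuousLinearMap.apply_apply] at h1
    rw [h1]
    exact tsum_congr fun k => by
      rw [ContinuousLinearMap.smul_apply, ThetaAux.mapd_single, smul_eq_mul]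
  have happζ : ∀ j, (fderiv ℝ (fun ζ' => theta T z ζ') ζ) (Pi.single j 1)
      = ∑' k : Fin a → ℤ, ThetaAux.ex T k z ζ * Complex.I * ((k j : ℤ) : ℂ) := by
    intro j
    rw [hθζ.fderiv]
    have h1 := (ContinuousLinearMap.apply ℝ ℂ
      ((Pi.single j 1 : Fin a → ℝ))).map_tsum hsumDζ
    simp only [ContinuousLinearMap.apply_apply] at h1
    rw [h1]
    exact tsum_congr fun k => by
      rw [ContinuousLinearMap.smul_apply, ThetaAux.mapd_single, smul_eq_mul]
  -- summability of the coordinate families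
  have hsz : ∀ j, Summable fun k : Fin a → ℤ =>
      ThetaAux.ex T k z ζ * (T.mulVec (cv fun i => z i + 2 * π * k i)) j := by
    intro j
    have h1 := hsumDz.mapL (ContinuousLinearMap.apply ℝ ℂ ((Pi.single j 1 : Fin a → ℝ)))
    refine h1.congr fun k => ?_
    simp only [ContinuousLinearMap.apply_apply, ContinuousLinearMap.smul_apply,
      ThetaAux.mapd_single, smul_eq_mul]
  have hsζ : ∀ j, Summable fun k : Fin a → ℤ =>
      ThetaAux.ex T k z ζ * Complex.I * ((k j : ℤ) : ℂ) := by
    intro j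
    have h1 := hsumDζ.mapL (ContinuousLinearMap.apply ℝ ℂ ((Pi.single j 1 : Fin a → ℝ)))
    refine h1.congr fun k => ?_
    simp only [ContinuousLinearMap.apply_apply, ContinuousLinearMap.smul_apply,
      ThetaAux.mapd_single, smul_eq_mul]
  -- the per-term combination
  have hmain : ∀ j : Fin a,
      γp j * ((z j : ℂ) * theta T z ζ
          + (2 * (π : ℂ) / Complex.I) * (fderiv ℝ (fun ζ' => theta T z ζ') ζ) (Pi.single j 1))
        + γm j * (fderiv ℝ (fun z' => theta T z' ζ) z) (Pi.single j 1)
      = ∑' k : Fin a → ℤ, (γp j * ((z j : ℂ) * ThetaAux.ex T k z ζ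
          + (2 * (π : ℂ) / Complex.I) * (ThetaAux.ex T k z ζ * Complex.I * ((k j : ℤ) : ℂ)))
        + γm j * (ThetaAux.ex T k z ζ * (T.mulVec (cv fun i => z i + 2 * π * k i)) j)) := by
    intro j
    rw [happζ j, happz j, ThetaAux.theta_eq,
      Summable.tsum_add (((((hsum0 ζ).mul_left ((z j : ℂ))).add
        ((hsζ j).mul_left (2 * (π : ℂ) / Complex.I))).mul_left (γp j)))
        ((hsz j).mul_left (γm j)),
      tsum_mul_left, tsum_mul_left,
      Summable.tsum_add (((hsum0 ζ).mul_left ((z j : ℂ))) ) (((hsζ j).mul_left (2 * (π : ℂ) / Complex.I))),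
      tsum_mul_left, tsum_mul_left]
  have hsFj : ∀ j : Fin a, Summable fun k : Fin a → ℤ =>
      γp j * ((z j : ℂ) * ThetaAux.ex T k z ζ
          + (2 * (π : ℂ) / Complex.I) * (ThetaAux.ex T k z ζ * Complex.I * ((k j : ℤ) : ℂ)))
        + γm j * (ThetaAux.ex T k z ζ * (T.mulVec (cv fun i => z i + 2 * π * k i)) j) :=
    fun j => (((((hsum0 ζ).mul_left ((z j : ℂ))).add
        ((hsζ j).mul_left (2 * (π : ℂ) / Complex.I))).mul_left (γp j))).add
        ((hsz j).mul_left (γm j))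
  -- the per-k identity
  have hkey : ∀ k : Fin a → ℤ,
      (∑ j, (γp j * ((z j : ℂ) * ThetaAux.ex T k z ζ
          + (2 * (π : ℂ) / Complex.I) * (ThetaAux.ex T k z ζ * Complex.I * ((k j : ℤ) : ℂ)))
        + γm j * (ThetaAux.ex T k z ζ * (T.mulVec (cv fun i => z i + 2 * π * k i)) j))) = 0 := by
    intro k
    set e := ThetaAux.ex T k z ζ with hedef
    set w : Fin a → ℂ := cv fun i => z i + 2 * π * k i with hwdef
    have hstep : ∀ j : Fin a, γp j * ((z j : ℂ) * e
          + (2 * (π : ℂ) / Complex.I) * (e * Complex.I * ((k j : ℤ) : ℂ)))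
        + γm j * (e * (T.mulVec w) j)
        = e * (γp j * w j) + e * (γm j * (T.mulVec w) j) := by
      intro j
      have hI : (2 * (π : ℂ) / Complex.I) * (e * Complex.I * ((k j : ℤ) : ℂ))
          = e * (2 * (π : ℂ) * ((k j : ℤ) : ℂ)) := by
        rw [div_mul_eq_mul_div, div_eq_iff Complex.I_ne_zero]
        ring
      rw [hI]
      have hw : w j = (z j : ℂ) + 2 * (π : ℂ) * ((k j : ℤ) : ℂ) := by
        rw [hwdef]
        simp only [cv]
        push_cast
        ring
      rw [hw]
      ring
    calc (∑ j, (γp j * ((z j : ℂ) * e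
          + (2 * (π : ℂ) / Complex.I) * (e * Complex.I * ((k j : ℤ) : ℂ)))
        + γm j * (e * (T.mulVec w) j)))
        = ∑ j, (e * (γp j * w j) + e * (γm j * (T.mulVec w) j)) :=
          Finset.sum_congr rfl fun j _ => hstep j
      _ = e * (∑ j, γp j * w j) + e * (∑ j, γm j * (T.mulVec w) j) := by
          rw [Finset.sum_add_distrib, Finset.mul_sum, Finset.mul_sum]
      _ = e * dotProduct γp w + e * dotProduct γm (T.mulVec w) := rfl
      _ = 0 := by
          rw [Matrix.dotProduct_mulVec]
          have h2 : Matrix.vecMul γm T = -γp := by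
            rw [← Matrix.mulVec_transpose, hsym, hγ, neg_neg]
          rw [h2, neg_dotProduct]
          ring
  calc (∑ j, (γp j * ((z j : ℂ) * theta T z ζ
          + (2 * (π : ℂ) / Complex.I) *
              fderiv ℝ (fun ζ' => theta T z ζ') ζ (Pi.single j 1))
        + γm j * fderiv ℝ (fun z' => theta T z' ζ) z (Pi.single j 1)))
      = ∑ j, ∑' k : Fin a → ℤ, (γp j * ((z j : ℂ) * ThetaAux.ex T k z ζ
          + (2 * (π : ℂ) / Complex.I) * (ThetaAux.ex T k z ζ * Complex.I * ((k j : ℤ) : ℂ)))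
        + γm j * (ThetaAux.ex T k z ζ * (T.mulVec (cv fun i => z i + 2 * π * k i)) j)) :=
        Finset.sum_congr rfl fun j _ => hmain j
    _ = ∑' k : Fin a → ℤ, ∑ j, (γp j * ((z j : ℂ) * ThetaAux.ex T k z ζ
          + (2 * (π : ℂ) / Complex.I) * (ThetaAux.ex T k z ζ * Complex.I * ((k j : ℤ) : ℂ)))
        + γm j * (ThetaAux.ex T k z ζ * (T.mulVec (cv fun i => z i + 2 * π * k i)) j)) :=
        (Summable.tsum_finsetSum fun j _ => hsFj j).symm
    _ = ∑' k : Fin a → ℤ, (0 : ℂ) := tsum_congr fun k => hkey k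
    _ = 0 := tsum_zero
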